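/- Let $c_1,\dots,c_n \ge 2$ be integers and $x_0 > x_1 > \cdots > x_n = 1 > x_{n+1} = 0$ satisfy $x_{j-1} = c_j x_j - x_{j+1}$. If $n_1, \dots, n_n$ are integers with $n_1 \le c_1 - 1$ and $n_j \le c_j - 2$ for all $j \ge 2$, then $\sum_{j=1}^n n_j x_j < x_0$. -/

import Mathlib

/-- "Claim 2" of the HKM-strong verification: if `n₁ ≤ c₁ - 1` and
`n_j ≤ c_j - 2` for `j ≥ 2`, then `∑ n_j x_j < x₀`. -/
theorem stmt5 (n : ℕ) (hn : 1 ≤ n) (c x m : ℕ → ℤ)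
    (hc : ∀ j, 1 ≤ j → j ≤ n → 2 ≤ c j)
    (hdec : ∀ j, j ≤ n → x (j + 1) < x j)
    (hxn : x n = 1) (hxn1 : x (n + 1) = 0)
    (hrec : ∀ j, 1 ≤ j → j ≤ n → x (j - 1) = c j * x j - x (j + 1))
    (hm1 : m 1 ≤ c 1 - 1)
    (hm : ∀ j, 2 ≤ j → j ≤ n → m j ≤ c j - 2) :
    ∑ j ∈ Finset.Icc 1 n, m j * x j < x 0 := by
  -- positivity: 1 ≤ x j for j ≤ n
  have hpos' : ∀ k, k ≤ n → 1 ≤ x (n - k) := by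
    intro k
    induction k with
    | zero => intro _; simpa using hxn.ge
    | succ k ih =>
      intro hk
      have h1 : n - k ≤ n := Nat.sub_le _ _
      have h2 : n - (k + 1) + 1 = n - k := by omega
      have := hdec (n - (k + 1)) (by omega)
      rw [h2] at this
      have := ih (by omega)
      omega
  have hpos : ∀ j, 1 ≤ j → j ≤ n → 1 ≤ x j := by
    intro j h1 h2
    have := hpos' (n - j) (by omega)
    rwa [show n - (n - j) = j by omega] at this
  -- downward telescoping bound
  have key : ∀ k, k ≤ n - 1 →
      ∑ j ∈ Finset.Icc (n + 1 - k) n, m j * x j ≤ x (n - k) - x (n + 1 - k) - 1 := by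
    intro k
    induction k with
    | zero =>
      intro _
      simp [Finset.Icc_eq_empty_of_lt (by omega : n < n + 1), hxn, hxn1]
    | succ k ih =>
      intro hk
      have hkn : k ≤ n - 1 := by omega
      have ha : n + 1 - (k + 1) = n - k := by omega
      have hb : n - k + 1 = n + 1 - k := by omega
      have hj2 : 2 ≤ n - k := by omega
      have hjn : n - k ≤ n := by omega
      rw [ha, ← Finset.insert_Icc_add_one_left_eq_Icc hjn, Finset.sum_insert (by simp)]
      have hx : 1 ≤ x (n - k) := hpos _ (by omega) hjn
      have hmk : m (n - k) ≤ c (n - k) - 2 := hm _ hj2 hjn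
      have hr := hrec (n - k) (by omega) hjn
      rw [show n - k - 1 = n - (k + 1) by omega, hb] at hr
      have hbd : m (n - k) * x (n - k) ≤ (c (n - k) - 2) * x (n - k) :=
        mul_le_mul_of_nonneg_right hmk (by omega)
      have hrest := ih hkn
      rw [hb]
      nlinarith [hrest, hbd]
  -- apply at k = n - 1
  have key2 := key (n - 1) le_rfl
  rw [show n + 1 - (n - 1) = 2 by omega, show n - (n - 1) = 1 by omega] at key2
  have hx1 : 1 ≤ x 1 := hpos 1 le_rfl hn
  have hr1 := hrec 1 le_rfl hn
  simp only [show (1 : ℕ) - 1 = 0 from rfl] at hr1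
  have hsplit : ∑ j ∈ Finset.Icc 1 n, m j * x j
      = m 1 * x 1 + ∑ j ∈ Finset.Icc 2 n, m j * x j := by
    rw [← Finset.insert_Icc_add_one_left_eq_Icc hn, Finset.sum_insert (by simp)]
    rfl
  have hbd1 : m 1 * x 1 ≤ (c 1 - 1) * x 1 :=
    mul_le_mul_of_nonneg_right hm1 (by omega)
  nlinarith [key2, hbd1]
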